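/- Define e_{1i}(m1,n1) = q^{−m1 n1} μ ∂/∂x_i(−m1,−n1) − Σ_{j=2}^l Σ_{(m,n),(m',n')} q^{n1 m' + n m1 + n m'} x_j(m1+m+m', n1+n+n') ∂/∂x_j(m,n) ∂/∂x_i(m',n') for 2 ≤ i ≤ l. Then for all 2 ≤ i ≤ l and m1,n1,m2,n2 ∈ Z: [x_i(m1,n1)·, e_{1i}(m2,n2)] = −q^{n2 m1} e_{11}(m1+m2, n1+n2) + q^{n1 m2} e_{ii}(m1+m2, n1+n2), where e_{11}(m,n) = μ δ_{(m,n),(0,0)} − Σ_{j=2}^l Σ q^{n' m} x_j(m+m', n+n') ∂/∂x_j(m',n') and e_{ii}(m,n) = Σ q^{m' n} x_i(m+m', n+n') ∂/∂x_i(m',n'). -/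
import Mathlib


open MvPolynomial

/-- Index set `{2, …, l}` for the variables. -/
abbrev Idx (l : ℕ) := {i : ℕ // 2 ≤ i ∧ i ≤ l}

/-- The polynomial ring `V = ℂ[x_i(m,n) : 2 ≤ i ≤ l, (m,n) ∈ ℤ²]`. -/
abbrev V (l : ℕ) := MvPolynomial (Idx l × ℤ × ℤ) ℂ

/-- `e_{ij}(m1,n1) = Σ_{(m,n)} q^{m n1} x_i(m1+m, n1+n) ∂/∂x_j(m,n)`, for `2 ≤ i,j ≤ l`. -/
noncomputable def eGen (l : ℕ) (q : ℂ) (i j : Idx l) (m1 n1 : ℤ) (p : V l) : V l :=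
  ∑ᶠ mn : ℤ × ℤ,
    q ^ (mn.1 * n1) • (X (i, m1 + mn.1, n1 + mn.2) * pderiv (j, mn.1, mn.2) p)

/-- `e_{i1}(m,n)` = multiplication by the variable `x_i(m,n)`. -/
noncomputable def eLow (l : ℕ) (i : Idx l) (m n : ℤ) (p : V l) : V l :=
  X (i, m, n) * p

/-- `e_{11}(m1,n1) = μ δ_{(m1,n1),(0,0)} − Σ_{j=2}^l Σ_{(m,n)} q^{n m1} x_j(m1+m, n1+n) ∂/∂x_j(m,n)`. -/
noncomputable def e11 (l : ℕ) (q μ : ℂ) (m1 n1 : ℤ) (p : V l) : V l :=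
  (if (m1, n1) = ((0 : ℤ), (0 : ℤ)) then μ else 0) • p
  - ∑ᶠ j : Idx l, ∑ᶠ mn : ℤ × ℤ,
      q ^ (mn.2 * m1) • (X (j, m1 + mn.1, n1 + mn.2) * pderiv (j, mn.1, mn.2) p)

/-- `e_{1i}(m1,n1) = q^{−m1 n1} μ ∂/∂x_i(−m1,−n1)
  − Σ_{j=2}^l Σ_{(m,n),(m',n')} q^{n1 m' + n m1 + n m'}
      x_j(m1+m+m', n1+n+n') ∂/∂x_j(m,n) ∂/∂x_i(m',n')`, for `2 ≤ i ≤ l`. -/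
noncomputable def eUp (l : ℕ) (q μ : ℂ) (i : Idx l) (m1 n1 : ℤ) (p : V l) : V l :=
  q ^ (-(m1 * n1)) • μ • pderiv (i, -m1, -n1) p
  - ∑ᶠ j : Idx l, ∑ᶠ mm : (ℤ × ℤ) × (ℤ × ℤ),
      q ^ (n1 * mm.2.1 + mm.1.2 * m1 + mm.1.2 * mm.2.1) •
        (X (j, m1 + mm.1.1 + mm.2.1, n1 + mm.1.2 + mm.2.2) *
          pderiv (j, mm.1.1, mm.1.2) (pderiv (i, mm.2.1, mm.2.2) p))

/-- Degree operator `D1 = Σ_{i=2}^l Σ_{(m,n)} m · x_i(m,n) ∂/∂x_i(m,n)`. -/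
noncomputable def D1 (l : ℕ) (p : V l) : V l :=
  ∑ᶠ i : Idx l, ∑ᶠ mn : ℤ × ℤ,
    (mn.1 : ℂ) • (X (i, mn.1, mn.2) * pderiv (i, mn.1, mn.2) p)

/-- Degree operator `D2 = Σ_{i=2}^l Σ_{(m,n)} n · x_i(m,n) ∂/∂x_i(m,n)`. -/
noncomputable def D2 (l : ℕ) (p : V l) : V l :=
  ∑ᶠ i : Idx l, ∑ᶠ mn : ℤ × ℤ,
    (mn.2 : ℂ) • (X (i, mn.1, mn.2) * pderiv (i, mn.1, mn.2) p)

/-- Commutator `[A,B] = A∘B − B∘A` of operators on `V`. -/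
noncomputable def oComm {l : ℕ} (A B : V l → V l) : V l → V l := fun p => A (B p) - B (A p)


-- pderiv commutes
theorem my_pderiv_comm {σ R : Type*} [CommSemiring R] (a b : σ) (p : MvPolynomial σ R) :
    pderiv a (pderiv b p) = pderiv b (pderiv a p) := by
  classical
  induction p using MvPolynomial.induction_on with
  | C c => simp
  | add p q hp hq => simp [hp, hq]
  | mul_X p n hp =>
      simp only [pderiv_mul, map_add, hp, pderiv_X]
      rcases eq_or_ne n a with rfl | ha <;> rcases eq_or_ne n b with rfl | hb <;>
        simp [Pi.single_apply, *]

theorem my_collapse {M α β : Type*} [AddCommMonoid M] [DecidableEq α]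
    (s : Finset α) (t : Finset β) (a0 : α) (h : a0 ∈ s) (F : β → M) :
    (∑ x ∈ s ×ˢ t, if x.1 = a0 then F x.2 else 0) = ∑ b ∈ t, F b := by
  rw [Finset.sum_product]
  rw [show (∑ a ∈ s, ∑ b ∈ t, if a = a0 then F b else 0)
      = ∑ a ∈ s, if a = a0 then (∑ b ∈ t, F b) else 0 by
    refine Finset.sum_congr rfl fun a _ => ?_
    split_ifs <;> simp]
  rw [Finset.sum_ite_eq' s a0 (fun _ => ∑ b ∈ t, F b), if_pos h]

theorem my_collapse2 {M α β : Type*} [AddCommMonoid M] [DecidableEq β]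
    (s : Finset α) (t : Finset β) (b0 : β) (h : b0 ∈ t) (F : α → M) :
    (∑ x ∈ s ×ˢ t, if x.2 = b0 then F x.1 else 0) = ∑ a ∈ s, F a := by
  rw [Finset.sum_product]
  refine Finset.sum_congr rfl fun a _ => ?_
  rw [Finset.sum_ite_eq' t b0 (fun _ => F a), if_pos h]


noncomputable instance (l : ℕ) : Fintype (Idx l) :=
  Fintype.ofInjective (fun j : Idx l => (⟨j.1, by omega⟩ : Fin (l+1)))
    (by intro a b h; exact Subtype.ext (congrArg Fin.val h))

theorem my_pd_vars {l : ℕ} (P : V l) {S : Finset (ℤ × ℤ)}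
    (hS : ∀ v ∈ P.vars, v.2 ∈ S) (a : Idx l × ℤ × ℤ) (h : pderiv a P ≠ 0) : a.2 ∈ S := by
  by_contra hc
  exact h (pderiv_eq_zero_of_notMem_vars fun hv => hc (hS a hv))

-- convert single finsum
theorem my_conv1 {l : ℕ} (P : V l) {S : Finset (ℤ × ℤ)}
    (hS : ∀ a : Idx l × ℤ × ℤ, pderiv a P ≠ 0 → a.2 ∈ S)
    (c : ℤ × ℤ → ℂ) (v : ℤ × ℤ → Idx l × ℤ × ℤ) (j : Idx l) :
    (∑ᶠ mn : ℤ × ℤ, c mn • (X (v mn) * pderiv (j, mn.1, mn.2) P))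
      = ∑ mn ∈ S, c mn • (X (v mn) * pderiv (j, mn.1, mn.2) P) := by
  refine finsum_eq_sum_of_support_subset _ fun mn hmn => ?_
  refine hS (j, mn.1, mn.2) fun h0 => hmn ?_
  simp [Function.mem_support, h0] at hmn ⊢

-- convert double finsum
theorem my_conv2 {l : ℕ} (P : V l) {S : Finset (ℤ × ℤ)}
    (hS : ∀ a : Idx l × ℤ × ℤ, pderiv a P ≠ 0 → a.2 ∈ S)
    (c : (ℤ × ℤ) × (ℤ × ℤ) → ℂ) (v : (ℤ × ℤ) × (ℤ × ℤ) → Idx l × ℤ × ℤ) (i j : Idx l) :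
    (∑ᶠ mm : (ℤ × ℤ) × (ℤ × ℤ), c mm •
        (X (v mm) * pderiv (j, mm.1.1, mm.1.2) (pderiv (i, mm.2.1, mm.2.2) P)))
      = ∑ mm ∈ S ×ˢ S, c mm •
        (X (v mm) * pderiv (j, mm.1.1, mm.1.2) (pderiv (i, mm.2.1, mm.2.2) P)) := by
  classical
  refine finsum_eq_sum_of_support_subset _ fun mm hmm => ?_
  have h0 : pderiv (j, mm.1.1, mm.1.2) (pderiv (i, mm.2.1, mm.2.2) P) ≠ 0 := by
    intro h0; apply hmm; simp [Function.mem_support, h0]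
  have h2 : pderiv (i, mm.2.1, mm.2.2) P ≠ 0 := fun h => h0 (by simp [h])
  have h1 : pderiv (j, mm.1.1, mm.1.2) P ≠ 0 := by
    intro h
    rw [show pderiv ((j, mm.1.1, mm.1.2) : Idx l × ℤ × ℤ) (pderiv (i, mm.2.1, mm.2.2) P)
        = pderiv (i, mm.2.1, mm.2.2) (pderiv (j, mm.1.1, mm.1.2) P) from
      my_pderiv_comm _ _ _, h, map_zero] at h0
    exact h0 rfl
  simp only [Finset.coe_product, Set.mem_prod]
  exact ⟨hS _ h1, hS _ h2⟩

theorem my_key1 {l : ℕ} (x0 a : Idx l × ℤ × ℤ) (p : V l) :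
    pderiv a (X x0 * p) = (if x0 = a then p else 0) + X x0 * pderiv a p := by
  classical
  rw [pderiv_mul, pderiv_X]
  simp [Pi.single_apply, ite_mul]

theorem my_key2 {l : ℕ} (x0 a b : Idx l × ℤ × ℤ) (p : V l) :
    pderiv b (pderiv a (X x0 * p)) =
      (if x0 = a then pderiv b p else 0) + (if x0 = b then pderiv a p else 0)
        + X x0 * pderiv b (pderiv a p) := by
  classical
  rw [my_key1, map_add, my_key1]
  rw [apply_ite (pderiv b), map_zero]
  ring

theorem my_step (l : ℕ) (q μ : ℂ) (i j : Idx l) (m1 n1 m2 n2 a1 a2 b1 b2 : ℤ) (p : V l) :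
      q ^ (n2 * b1 + a2 * m2 + a2 * b1) •
        (X (j, m2 + a1 + b1, n2 + a2 + b2) *
          pderiv (j, a1, a2) (pderiv (i, b1, b2) (X (i, m1, n1) * p)))
      = (X (i, m1, n1) *
          (q ^ (n2 * b1 + a2 * m2 + a2 * b1) •
            (X (j, m2 + a1 + b1, n2 + a2 + b2) *
              pderiv (j, a1, a2) (pderiv (i, b1, b2) p))))
        + (if ((a1, a2) : ℤ × ℤ) = (m1, n1) then
            (if j = i then q ^ (n2 * b1 + n1 * m2 + n1 * b1) •
              (X (i, m2 + m1 + b1, n2 + n1 + b2) * pderiv (i, b1, b2) p)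
             else 0) else 0)
        + (if ((b1, b2) : ℤ × ℤ) = (m1, n1) then
            q ^ (n2 * m1 + a2 * m2 + a2 * m1) •
              (X (j, m2 + a1 + m1, n2 + a2 + n1) * pderiv (j, a1, a2) p)
           else 0) := by
  classical
  rw [my_key2]
  have c1 : (((i, m1, n1) : Idx l × ℤ × ℤ) = (i, b1, b2)) ↔ (((b1, b2) : ℤ × ℤ) = (m1, n1)) := by
    simp only [Prod.mk.injEq, true_and]
    constructor
    · rintro ⟨h1, h2⟩; exact ⟨h1.symm, h2.symm⟩
    · rintro ⟨h1, h2⟩; exact ⟨h1.symm, h2.symm⟩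
  have c2 : (((i, m1, n1) : Idx l × ℤ × ℤ) = (j, a1, a2)) ↔
      ((((a1, a2) : ℤ × ℤ) = (m1, n1)) ∧ j = i) := by
    simp only [Prod.mk.injEq]
    constructor
    · rintro ⟨h1, h2, h3⟩; exact ⟨⟨h2.symm, h3.symm⟩, h1.symm⟩
    · rintro ⟨⟨h1, h2⟩, h3⟩; exact ⟨h3.symm, h1.symm, h2.symm⟩
  rw [if_congr c1 rfl rfl, if_congr c2 rfl rfl, ite_and]
  simp only [smul_eq_C_mul]
  split_ifs
  all_goals clear c1 c2
  all_goals try simp only [Prod.mk.injEq] at *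
  all_goals try casesm* _ ∧ _
  all_goals subst_vars
  all_goals ring
theorem my_lhs (l : ℕ) (q μ : ℂ) (i : Idx l) (m1 n1 m2 n2 : ℤ) (p : V l)
    (S : Finset (ℤ × ℤ)) (hm : ((m1, n1) : ℤ × ℤ) ∈ S) :
    (∑ j : Idx l, ∑ mm ∈ S ×ˢ S,
      q ^ (n2 * mm.2.1 + mm.1.2 * m2 + mm.1.2 * mm.2.1) •
        (X (j, m2 + mm.1.1 + mm.2.1, n2 + mm.1.2 + mm.2.2) *
          pderiv (j, mm.1.1, mm.1.2) (pderiv (i, mm.2.1, mm.2.2) (X (i, m1, n1) * p))))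
    = X (i, m1, n1) * (∑ j : Idx l, ∑ mm ∈ S ×ˢ S,
        q ^ (n2 * mm.2.1 + mm.1.2 * m2 + mm.1.2 * mm.2.1) •
          (X (j, m2 + mm.1.1 + mm.2.1, n2 + mm.1.2 + mm.2.2) *
            pderiv (j, mm.1.1, mm.1.2) (pderiv (i, mm.2.1, mm.2.2) p)))
      + (∑ b ∈ S, q ^ (n2 * b.1 + n1 * m2 + n1 * b.1) •
          (X (i, m2 + m1 + b.1, n2 + n1 + b.2) * pderiv (i, b.1, b.2) p))
      + (∑ j : Idx l, ∑ a ∈ S, q ^ (n2 * m1 + a.2 * m2 + a.2 * m1) •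
          (X (j, m2 + a.1 + m1, n2 + a.2 + n1) * pderiv (j, a.1, a.2) p)) := by
  classical
  have step : ∀ j : Idx l, ∀ mm ∈ S ×ˢ S,
      q ^ (n2 * mm.2.1 + mm.1.2 * m2 + mm.1.2 * mm.2.1) •
        (X (j, m2 + mm.1.1 + mm.2.1, n2 + mm.1.2 + mm.2.2) *
          pderiv (j, mm.1.1, mm.1.2) (pderiv (i, mm.2.1, mm.2.2) (X (i, m1, n1) * p)))
      = (X (i, m1, n1) *
          (q ^ (n2 * mm.2.1 + mm.1.2 * m2 + mm.1.2 * mm.2.1) •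
            (X (j, m2 + mm.1.1 + mm.2.1, n2 + mm.1.2 + mm.2.2) *
              pderiv (j, mm.1.1, mm.1.2) (pderiv (i, mm.2.1, mm.2.2) p))))
        + (if mm.1 = ((m1, n1) : ℤ × ℤ) then
            (if j = i then q ^ (n2 * mm.2.1 + n1 * m2 + n1 * mm.2.1) •
              (X (i, m2 + m1 + mm.2.1, n2 + n1 + mm.2.2) * pderiv (i, mm.2.1, mm.2.2) p)
             else 0) else 0)
        + (if mm.2 = ((m1, n1) : ℤ × ℤ) then
            q ^ (n2 * m1 + mm.1.2 * m2 + mm.1.2 * m1) •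
              (X (j, m2 + mm.1.1 + m1, n2 + mm.1.2 + n1) * pderiv (j, mm.1.1, mm.1.2) p)
           else 0) := by
    rintro j ⟨⟨a1, a2⟩, b1, b2⟩ _
    exact my_step l q μ i j m1 n1 m2 n2 a1 a2 b1 b2 p
  calc (∑ j : Idx l, ∑ mm ∈ S ×ˢ S, _) = _ := Finset.sum_congr rfl fun j _ =>
        Finset.sum_congr rfl (step j)
    _ = _ := by
      simp only [Finset.sum_add_distrib]
      congr 1
      · congr 1
        · rw [Finset.mul_sum]
          exact Finset.sum_congr rfl fun j _ => (Finset.mul_sum _ _ _).symm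
        · rw [show (∑ j : Idx l, ∑ mm ∈ S ×ˢ S,
              (if mm.1 = ((m1, n1) : ℤ × ℤ) then
                (if j = i then q ^ (n2 * mm.2.1 + n1 * m2 + n1 * mm.2.1) •
                  (X (i, m2 + m1 + mm.2.1, n2 + n1 + mm.2.2) * pderiv (i, mm.2.1, mm.2.2) p)
                 else 0) else 0))
              = ∑ j : Idx l, (if j = i then
                  (∑ b ∈ S, q ^ (n2 * b.1 + n1 * m2 + n1 * b.1) •
                    (X (i, m2 + m1 + b.1, n2 + n1 + b.2) * pderiv (i, b.1, b.2) p)) else 0)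
            from Finset.sum_congr rfl fun j _ => by
              rw [my_collapse S S (m1, n1) hm
                (fun b => if j = i then q ^ (n2 * b.1 + n1 * m2 + n1 * b.1) •
                  (X (i, m2 + m1 + b.1, n2 + n1 + b.2) * pderiv (i, b.1, b.2) p) else 0)]
              split_ifs <;> simp]
          rw [Finset.sum_ite_eq' Finset.univ i, if_pos (Finset.mem_univ i)]
      · exact Finset.sum_congr rfl fun j _ => my_collapse2 S S (m1, n1) hm
          (fun a => q ^ (n2 * m1 + a.2 * m2 + a.2 * m1) •
            (X (j, m2 + a.1 + m1, n2 + a.2 + n1) * pderiv (j, a.1, a.2) p))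

theorem stmt6 (l : ℕ) (hl : 2 ≤ l) (q μ : ℂ) (hq : q ≠ 0)
    (i : Idx l) (m1 n1 m2 n2 : ℤ) :
    oComm (eLow l i m1 n1) (eUp l q μ i m2 n2) = fun p =>
      -(q ^ (n2 * m1) • e11 l q μ (m1 + m2) (n1 + n2) p)
      + q ^ (n1 * m2) • eGen l q i i (m1 + m2) (n1 + n2) p := by
  classical
  funext p
  simp only [oComm, eLow, eUp, e11, eGen]
  set S : Finset (ℤ × ℤ) :=
    ((X (i, m1, n1) * p).vars ∪ p.vars).image Prod.snd ∪ {(m1, n1), (-m2, -n2)} with hSdef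
  have hm : ((m1, n1) : ℤ × ℤ) ∈ S := by simp [hSdef]
  have hSp : ∀ a : Idx l × ℤ × ℤ, pderiv a p ≠ 0 → a.2 ∈ S := by
    intro a ha
    refine my_pd_vars p (fun v hv => ?_) a ha
    simp only [hSdef, Finset.mem_union, Finset.mem_image]
    exact Or.inl ⟨v, Or.inr hv, rfl⟩
  have hSx : ∀ a : Idx l × ℤ × ℤ, pderiv a (X (i, m1, n1) * p) ≠ 0 → a.2 ∈ S := by
    intro a ha
    refine my_pd_vars _ (fun v hv => ?_) a ha
    simp only [hSdef, Finset.mem_union, Finset.mem_image]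
    exact Or.inl ⟨v, Or.inl hv, rfl⟩
  -- convert all finsums to finite sums
  have conv1 : (∑ᶠ j : Idx l, ∑ᶠ mm : (ℤ × ℤ) × (ℤ × ℤ),
      q ^ (n2 * mm.2.1 + mm.1.2 * m2 + mm.1.2 * mm.2.1) •
        (X (j, m2 + mm.1.1 + mm.2.1, n2 + mm.1.2 + mm.2.2) *
          pderiv (j, mm.1.1, mm.1.2) (pderiv (i, mm.2.1, mm.2.2) p)))
      = ∑ j : Idx l, ∑ mm ∈ S ×ˢ S,
        q ^ (n2 * mm.2.1 + mm.1.2 * m2 + mm.1.2 * mm.2.1) •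
          (X (j, m2 + mm.1.1 + mm.2.1, n2 + mm.1.2 + mm.2.2) *
            pderiv (j, mm.1.1, mm.1.2) (pderiv (i, mm.2.1, mm.2.2) p)) := by
    rw [finsum_eq_sum_of_fintype]
    exact Finset.sum_congr rfl fun j _ => my_conv2 p hSp _ _ i j
  have conv2 : (∑ᶠ j : Idx l, ∑ᶠ mm : (ℤ × ℤ) × (ℤ × ℤ),
      q ^ (n2 * mm.2.1 + mm.1.2 * m2 + mm.1.2 * mm.2.1) •
        (X (j, m2 + mm.1.1 + mm.2.1, n2 + mm.1.2 + mm.2.2) *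
          pderiv (j, mm.1.1, mm.1.2) (pderiv (i, mm.2.1, mm.2.2) (X (i, m1, n1) * p))))
      = ∑ j : Idx l, ∑ mm ∈ S ×ˢ S,
        q ^ (n2 * mm.2.1 + mm.1.2 * m2 + mm.1.2 * mm.2.1) •
          (X (j, m2 + mm.1.1 + mm.2.1, n2 + mm.1.2 + mm.2.2) *
            pderiv (j, mm.1.1, mm.1.2) (pderiv (i, mm.2.1, mm.2.2) (X (i, m1, n1) * p))) := by
    rw [finsum_eq_sum_of_fintype]
    exact Finset.sum_congr rfl fun j _ => my_conv2 _ hSx _ _ i j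
  have conv3 : (∑ᶠ j : Idx l, ∑ᶠ mn : ℤ × ℤ,
      q ^ (mn.2 * (m1 + m2)) •
        (X (j, m1 + m2 + mn.1, n1 + n2 + mn.2) * pderiv (j, mn.1, mn.2) p))
      = ∑ j : Idx l, ∑ mn ∈ S,
        q ^ (mn.2 * (m1 + m2)) •
          (X (j, m1 + m2 + mn.1, n1 + n2 + mn.2) * pderiv (j, mn.1, mn.2) p) := by
    rw [finsum_eq_sum_of_fintype]
    exact Finset.sum_congr rfl fun j _ => my_conv1 p hSp _ _ j
  have conv4 : (∑ᶠ mn : ℤ × ℤ,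
      q ^ (mn.1 * (n1 + n2)) •
        (X (i, m1 + m2 + mn.1, n1 + n2 + mn.2) * pderiv (i, mn.1, mn.2) p))
      = ∑ mn ∈ S,
        q ^ (mn.1 * (n1 + n2)) •
          (X (i, m1 + m2 + mn.1, n1 + n2 + mn.2) * pderiv (i, mn.1, mn.2) p) :=
    my_conv1 p hSp _ _ i
  rw [conv1, conv2, conv3, conv4, my_lhs l q μ i m1 n1 m2 n2 p S hm,
    my_key1 (i, m1, n1) (i, -m2, -n2) p]
  -- coefficient/delta matching lemmas
  have eδ : q ^ (-(m2 * n2)) • μ •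
        (if ((i, m1, n1) : Idx l × ℤ × ℤ) = (i, -m2, -n2) then p else 0)
      = q ^ (n2 * m1) • (if ((m1 + m2, n1 + n2) : ℤ × ℤ) = (0, 0) then μ else 0) • p := by
    by_cases h : m1 = -m2 ∧ n1 = -n2
    · obtain ⟨h1, h2⟩ := h; subst h1; subst h2
      rw [if_pos rfl, if_pos (by norm_num), show n2 * -m2 = -(m2 * n2) from by ring]
    · have h1 : ¬((i, m1, n1) : Idx l × ℤ × ℤ) = (i, -m2, -n2) := by
        simp only [Prod.mk.injEq]; tauto
      have h2 : ¬(m1 + m2 = 0 ∧ n1 + n2 = 0) := by omega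
      simp [h1, h2, Prod.mk.injEq]
  have eI : (∑ b ∈ S, q ^ (n2 * b.1 + n1 * m2 + n1 * b.1) •
        (X (i, m2 + m1 + b.1, n2 + n1 + b.2) * pderiv (i, b.1, b.2) p))
      = q ^ (n1 * m2) • ∑ mn ∈ S, q ^ (mn.1 * (n1 + n2)) •
          (X (i, m1 + m2 + mn.1, n1 + n2 + mn.2) * pderiv (i, mn.1, mn.2) p) := by
    rw [Finset.smul_sum]
    refine Finset.sum_congr rfl fun b _ => ?_
    rw [smul_smul, ← zpow_add₀ hq]
    ring_nf
  have eJ : (∑ j : Idx l, ∑ a ∈ S, q ^ (n2 * m1 + a.2 * m2 + a.2 * m1) •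
        (X (j, m2 + a.1 + m1, n2 + a.2 + n1) * pderiv (j, a.1, a.2) p))
      = q ^ (n2 * m1) • ∑ j : Idx l, ∑ mn ∈ S, q ^ (mn.2 * (m1 + m2)) •
          (X (j, m1 + m2 + mn.1, n1 + n2 + mn.2) * pderiv (j, mn.1, mn.2) p) := by
    rw [Finset.smul_sum]
    refine Finset.sum_congr rfl fun j _ => ?_
    rw [Finset.smul_sum]
    refine Finset.sum_congr rfl fun a _ => ?_
    rw [smul_smul, ← zpow_add₀ hq]
    ring_nf
  clear conv1 conv2 conv3 conv4 hSp hSx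
  rw [eI, eJ]
  simp only [mul_sub, smul_add, smul_sub, mul_smul_comm]
  rw [eδ]
  abel
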